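/- arXiv:1103.0510 — 5 statements merged into one kernel-verified Lean document; each statement's English description precedes it below -/
import Mathlib

section
/- Soundness of rule ▷⇒ (the later modality distributes over implication): if P, Q : ℕ → Prop are downward-closed, then for every n, (▷(P ⇛ Q)) n holds if and only if ((▷P) ⇛ (▷Q)) n holds. -/
/-- The 'later' modality of the step-indexed model. -/
def later (P : ℕ → Prop) : ℕ → Prop := fun n => ∀ k < n, P k

/-- Kripke implication of the step-indexed model. -/
def kimp (P Q : ℕ → Prop) : ℕ → Prop := fun n => ∀ k ≤ n, P k → Q k

/-- A predicate on worlds is downward-closed (monotone). -/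
def DownClosed (P : ℕ → Prop) : Prop := ∀ m n, m ≤ n → P n → P m

/-- Soundness of rule ▷⇒: the later modality distributes over
(Kripke) implication, given monotonicity. -/
theorem later_kimp_sound (P Q : ℕ → Prop)
    (hP : DownClosed P) (hQ : DownClosed Q) :
    ∀ n, later (kimp P Q) n ↔ kimp (later P) (later Q) n := by
  intro n
  constructor
  · intro h k hk hlp j hj
    exact h j (lt_of_lt_of_le hj hk) j le_rfl (hlp j hj)
  · intro h m hm i hi hPi
    have hlp : later P (i + 1) := fun k hk => hP k i (Nat.lt_succ_iff.mp hk) hPi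
    exact h (i + 1) (Nat.succ_le_of_lt (lt_of_le_of_lt hi hm)) hlp i (Nat.lt_succ_self i)
end

section
/- Soundness of rule ▷∨ (the later modality distributes over disjunction): if P, Q : ℕ → Prop are downward-closed, then for every n, (▷(fun k => P k ∨ Q k)) n holds if and only if (▷P) n ∨ (▷Q) n holds. -/
/-- Soundness of rule ▷∨: the later modality distributes over disjunction,
given monotonicity. -/
theorem later_or_sound (P Q : ℕ → Prop)
    (hP : DownClosed P) (hQ : DownClosed Q) :
    ∀ n, later (fun k => P k ∨ Q k) n ↔ (later P n ∨ later Q n) := by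
  intro n
  constructor
  · intro h
    cases n with
    | zero => exact Or.inl (fun k hk => absurd hk (Nat.not_lt_zero k))
    | succ m =>
      rcases h m (Nat.lt_succ_self m) with hp | hq
      · exact Or.inl (fun k hk => hP k m (Nat.lt_succ_iff.mp hk) hp)
      · exact Or.inr (fun k hk => hQ k m (Nat.lt_succ_iff.mp hk) hq)
  · rintro (h | h) k hk
    · exact Or.inl (h k hk)
    · exact Or.inr (h k hk)
end

section
/- Soundness of rule ▷∃ (corrected with an inhabitedness side condition): for every nonempty type ι and every family P : ι → ℕ → Prop such that each P i is downward-closed, and every n, (▷(fun k => ∃ i, P i k)) n holds if and only if ∃ i, (▷(P i)) n holds. -/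
/-- Soundness of the corrected rule ▷∃: the later modality distributes over
existential quantification over a nonempty domain of downward-closed
predicates. -/
theorem later_exists_sound {ι : Type*} [Nonempty ι] (P : ι → ℕ → Prop)
    (hP : ∀ i, DownClosed (P i)) :
    ∀ n, later (fun k => ∃ i, P i k) n ↔ (∃ i, later (P i) n) := by
  intro n
  constructor
  · intro h
    cases n with
    | zero => exact ⟨Classical.arbitrary ι, fun k hk => absurd hk (Nat.not_lt_zero k)⟩
    | succ m =>
      obtain ⟨i, hi⟩ := h m (Nat.lt_succ_self m)
      exact ⟨i, fun k hk => hP i k m (Nat.lt_succ_iff.mp hk) hi⟩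
  · rintro ⟨i, hi⟩ k hk
    exact ⟨i, hi k hk⟩
end

section
/- For a world-independent (first-order) proposition, 'later' implies 'now' at every world except world 1: let c : Prop and define P : ℕ → Prop by P n := (n = 0 ∨ c), the model interpretation of a first-order proposition that is true in the trivial world 0 and whose truth elsewhere is given by c. Then for every n ≠ 1, (▷P) n implies P n; moreover (▷P) 1 always holds, so if ¬c then (▷P) 1 holds while P 1 fails. -/
/-- For a world-independent (first-order) proposition `c`, interpreted as
`P n := (n = 0 ∨ c)`, 'later' implies 'now' at every world except world 1;
`▷P` always holds at world 1, so if `¬c` then `▷P 1` holds while `P 1` fails. -/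
theorem later_implies_now_except_world_one (c : Prop) :
    (∀ n, n ≠ 1 → later (fun n => n = 0 ∨ c) n → (n = 0 ∨ c)) ∧
    later (fun n => n = 0 ∨ c) 1 ∧
    (¬c → later (fun n => n = 0 ∨ c) 1 ∧ ¬ ((1 : ℕ) = 0 ∨ c)) := by
  refine ⟨?_, ?_, ?_⟩
  · intro n hn h
    match n, hn with
    | 0, _ => exact Or.inl rfl
    | (m+2), _ =>
      have := h 1 (by omega)
      rcases this with h1 | hc
      · omega
      · exact Or.inr hc
  · intro k hk
    interval_cases k
    exact Or.inl rfl
  · intro hc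
    refine ⟨fun k hk => ?_, ?_⟩
    · interval_cases k; exact Or.inl rfl
    · rintro (h | h) <;> [omega; exact hc h]
end

section
/- Well-definedness of recursive relations μr.R: let F : (ℕ → Prop) → (ℕ → Prop) be contractive, meaning that for all P, Q : ℕ → Prop and all n, if P k ↔ Q k for every k < n, then F P n ↔ F Q n. Then there exists a predicate P : ℕ → Prop with P n ↔ F P n for all n, and this fixed point is unique: any Q : ℕ → Prop with Q n ↔ F Q n for all n satisfies Q n ↔ P n for all n. -/
/-- Well-definedness of recursive relations μr.R: a contractive operator on
world-indexed predicates has a fixed point, unique up to worldwise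
equivalence. -/
theorem contractive_fixed_point
    (F : (ℕ → Prop) → (ℕ → Prop))
    (hF : ∀ P Q : ℕ → Prop, ∀ n, (∀ k < n, (P k ↔ Q k)) → (F P n ↔ F Q n)) :
    ∃ P : ℕ → Prop, (∀ n, P n ↔ F P n) ∧
      ∀ Q : ℕ → Prop, (∀ n, Q n ↔ F Q n) → ∀ n, Q n ↔ P n := by
  set bot : ℕ → Prop := fun _ => False with hbot
  have key : ∀ n, ∀ m m', n < m → n < m' → (F^[m] bot n ↔ F^[m'] bot n) := by
    intro n
    induction n using Nat.strong_induction_on with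
    | _ n ih =>
      intro m m' hm hm'
      match m, m' with
      | a + 1, b + 1 =>
        rw [Function.iterate_succ_apply', Function.iterate_succ_apply']
        exact hF _ _ n fun k hk => ih k hk a b (lt_of_lt_of_le hk (Nat.lt_succ_iff.mp hm))
          (lt_of_lt_of_le hk (Nat.lt_succ_iff.mp hm'))
  refine ⟨fun n => F^[n + 1] bot n, fun n => ?_, ?_⟩
  · show F^[n + 1] bot n ↔ _
    rw [Function.iterate_succ_apply']
    exact hF _ _ n fun k hk => key k n (k + 1) hk (Nat.lt_succ_self k)
  · intro Q hQ n
    induction n using Nat.strong_induction_on with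
    | _ n ih =>
      show Q n ↔ F^[n + 1] bot n
      rw [hQ n, Function.iterate_succ_apply']
      exact hF _ _ n fun k hk =>
        (ih k hk).trans (key k (k + 1) n (Nat.lt_succ_self k) hk)
end
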